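/- Let X be a topological space, G a sheaf of sets on X, and V ⊆ X an open subset. Let (Cₙ)_{n∈ℕ} be closed subsets of X and (Uₙ)_{n∈ℕ} open subsets of X with Cₙ ⊆ Uₙ ⊆ Cₙ₊₁ for all n and ⋃ₙ Uₙ = V. For each n let G(Cₙ) denote the direct limit over open sets W ⊇ Cₙ of G(W) with restriction maps, and let G(Cₙ₊₁) → G(Cₙ) be the map induced by restriction. Then the canonical map G(V) → lim_n G(Cₙ) into the inverse limit of sets, sending a section over V to the sequence of its germ-classes along the Cₙ, is a bijection. -/
import Mathlib


open CategoryTheory TopologicalSpace Opposite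

universe u v

/-- Indexing set for germinal sections along a subset `C`: open sets containing `C`. -/
def NbhdIdx {X : Type u} [TopologicalSpace X] (C : Set X) : Type u :=
  {U : Opens X // C ⊆ ↑U}

/-- The relation identifying two sections, defined on open neighborhoods of `C`, when they agree
after restriction to a common smaller open neighborhood of `C`. -/
def GermRel {X : Type u} [TopologicalSpace X] (F : (Opens X)ᵒᵖ ⥤ Type v) (C : Set X) :
    (Σ U : NbhdIdx C, F.obj (op U.1)) → (Σ U : NbhdIdx C, F.obj (op U.1)) → Prop :=
  fun a b =>
    ∃ (W : NbhdIdx C) (h₁ : W.1 ≤ a.1.1) (h₂ : W.1 ≤ b.1.1),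
      F.map (homOfLE h₁).op a.2 = F.map (homOfLE h₂).op b.2

/-- `F(C)`: the direct limit, over open sets `U ⊇ C`, of the sections `F(U)` under restriction. -/
def Germs {X : Type u} [TopologicalSpace X] (F : (Opens X)ᵒᵖ ⥤ Type v) (C : Set X) :
    Type (max u v) :=
  Quot (GermRel F C)

/-- The canonical map `F(C') → F(C)` on germinal sections, for `C ⊆ C'`. -/
def germRestrict {X : Type u} [TopologicalSpace X] (F : (Opens X)ᵒᵖ ⥤ Type v)
    {C C' : Set X} (h : C ⊆ C') : Germs F C' → Germs F C :=
  Quot.lift (fun a => Quot.mk (GermRel F C) ⟨⟨a.1.1, h.trans a.1.2⟩, a.2⟩)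
    (by
      rintro ⟨U, s⟩ ⟨V, t⟩ ⟨W, h₁, h₂, hst⟩
      exact Quot.sound ⟨⟨W.1, h.trans W.2⟩, h₁, h₂, hst⟩)

section Aux
variable {X : Type u} [TopologicalSpace X] (F : (Opens X)ᵒᵖ ⥤ Type v)

lemma res_res {U V W : Opens X} (h1 : U ≤ V) (h2 : V ≤ W) (s : F.obj (op W)) :
    F.map (homOfLE h1).op (F.map (homOfLE h2).op s) = F.map (homOfLE (h1.trans h2)).op s := by
  rw [← FunctorToTypes.map_comp_apply]
  rfl

lemma germRel_equivalence (C : Set X) : Equivalence (GermRel F C) where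
  refl a := ⟨a.1, le_rfl, le_rfl, rfl⟩
  symm := fun ⟨W, h1, h2, h⟩ => ⟨W, h2, h1, h.symm⟩
  trans := by
    rintro a b c ⟨W, h1, h2, h⟩ ⟨W', h1', h2', h'⟩
    refine ⟨⟨W.1 ⊓ W'.1, fun x hx => ⟨W.2 hx, W'.2 hx⟩⟩, inf_le_left.trans h1,
      inf_le_right.trans h2', ?_⟩
    have e1 : F.map (homOfLE ((inf_le_left : W.1 ⊓ W'.1 ≤ W.1).trans h1)).op a.2
        = F.map (homOfLE ((inf_le_left : W.1 ⊓ W'.1 ≤ W.1).trans h2)).op b.2 := by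
      rw [← res_res F inf_le_left h1, h, res_res]
    have e2 : F.map (homOfLE ((inf_le_right : W.1 ⊓ W'.1 ≤ W'.1).trans h1')).op b.2
        = F.map (homOfLE ((inf_le_right : W.1 ⊓ W'.1 ≤ W'.1).trans h2')).op c.2 := by
      rw [← res_res F inf_le_right h1', h', res_res]
    exact e1.trans e2

lemma germRel_of_eq {C : Set X} {a b : Σ U : NbhdIdx C, F.obj (op U.1)}
    (h : Quot.mk (GermRel F C) a = Quot.mk (GermRel F C) b) : GermRel F C a b :=
  ((germRel_equivalence F C).eqvGen_iff).mp (Quot.eq.mp h)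

lemma glue
    (hsheaf : ∀ {ι : Type u} (W : ι → Opens X) (sec : ∀ i, F.obj (op (W i))),
      (∀ i j, F.map (homOfLE (inf_le_left : W i ⊓ W j ≤ W i)).op (sec i)
            = F.map (homOfLE (inf_le_right : W i ⊓ W j ≤ W j)).op (sec j)) →
      ∃! t : F.obj (op (iSup W)), ∀ i, F.map (homOfLE (le_iSup W i)).op t = sec i)
    {ι : Type u} (W : ι → Opens X) (O : Opens X) (hsup : iSup W = O)
    (hle : ∀ i, W i ≤ O) (sec : ∀ i, F.obj (op (W i)))
    (compat : ∀ i j, F.map (homOfLE (inf_le_left : W i ⊓ W j ≤ W i)).op (sec i)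
      = F.map (homOfLE (inf_le_right : W i ⊓ W j ≤ W j)).op (sec j)) :
    ∃! t : F.obj (op O), ∀ i, F.map (homOfLE (hle i)).op t = sec i := by
  subst hsup
  exact hsheaf W sec compat

end Aux

/-- **Claim 2 in the proof of Lemma 6.1** (set-theoretic form).  Let `G` be a sheaf of sets on a
topological space `X`, `V ⊆ X` open, and `(Cₙ)`, `(Uₙ)` respectively closed and open subsets with
`Cₙ ⊆ Uₙ ⊆ Cₙ₊₁` and `⋃ₙ Uₙ = V`.  Then the canonical map from `G(V)` to the inverse limit
`lim_n G(Cₙ)` of the germinal sections along the `Cₙ` is a bijection. -/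
theorem sections_bijective_inverseLimit_of_exhaustion
    {X : Type u} [TopologicalSpace X] (G : (Opens X)ᵒᵖ ⥤ Type v)
    (hsheaf : ∀ {ι : Type u} (W : ι → Opens X) (sec : ∀ i, G.obj (op (W i))),
      (∀ i j, G.map (homOfLE (inf_le_left : W i ⊓ W j ≤ W i)).op (sec i)
            = G.map (homOfLE (inf_le_right : W i ⊓ W j ≤ W j)).op (sec j)) →
      ∃! t : G.obj (op (iSup W)), ∀ i, G.map (homOfLE (le_iSup W i)).op t = sec i)
    (V : Opens X) (Cs : ℕ → Set X) (Us : ℕ → Opens X)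
    (hCclosed : ∀ n, IsClosed (Cs n))
    (hCU : ∀ n, Cs n ⊆ ↑(Us n)) (hUC : ∀ n, ↑(Us n) ⊆ Cs (n + 1))
    (hunion : (⋃ n, (Us n : Set X)) = ↑V) :
    Function.Bijective
      (fun s : G.obj (op V) =>
        (⟨fun n => Quot.mk (GermRel G (Cs n))
            ⟨⟨V, by
                intro x hx
                rw [← hunion]
                exact Set.mem_iUnion.mpr ⟨n, hCU n hx⟩⟩, s⟩,
          fun n => rfl⟩ :
          {gs : ∀ n, Germs G (Cs n) //
            ∀ n, germRestrict G ((hCU n).trans (hUC n)) (gs (n + 1)) = gs n})) := by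
  have hUV : ∀ n, (Us n : Set X) ⊆ ↑V := by
    intro n; rw [← hunion]; exact Set.subset_iUnion (fun k => (Us k : Set X)) n
  have hCmono : Monotone Cs := monotone_nat_of_le_succ fun n => (hCU n).trans (hUC n)
  constructor
  · -- injectivity
    intro s t h
    have h1 : ∀ n, GermRel G (Cs n)
        ⟨⟨V, fun x hx => by rw [← hunion]; exact Set.mem_iUnion.mpr ⟨n, hCU n hx⟩⟩, s⟩
        ⟨⟨V, fun x hx => by rw [← hunion]; exact Set.mem_iUnion.mpr ⟨n, hCU n hx⟩⟩, t⟩ :=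
      fun n => germRel_of_eq G (congrFun (congrArg Subtype.val h) n)
    choose W hW1 hW2 hW using h1
    set K : ULift.{u} ℕ → Opens X := fun k => (W k.down).1 with hK
    have hKV : ∀ k, K k ≤ V := fun k => hW1 k.down
    have hsupK : iSup K = V := by
      apply le_antisymm (iSup_le hKV)
      intro x hx
      have hx' : x ∈ ⋃ n, (Us n : Set X) := by rw [hunion]; exact hx
      obtain ⟨n, hn⟩ := Set.mem_iUnion.mp hx'
      exact Opens.mem_iSup.mpr ⟨⟨n + 1⟩, (W (n + 1)).2 (hUC n hn)⟩
    obtain ⟨u, hu, huniq⟩ := glue G hsheaf K V hsupK hKV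
      (fun k => G.map (homOfLE (hKV k)).op s)
      (fun i j => by rw [res_res, res_res])
    exact (huniq s fun k => rfl).trans (huniq t fun k => (hW k.down).symm).symm
  · -- surjectivity
    rintro ⟨gs, hgs⟩
    choose rep hrep using fun n => Quot.exists_rep (gs n)
    have hcomp : ∀ n, GermRel G (Cs n)
        ⟨⟨(rep (n + 1)).1.1, ((hCU n).trans (hUC n)).trans (rep (n + 1)).1.2⟩, (rep (n + 1)).2⟩
        (rep n) := by
      intro n
      apply germRel_of_eq G
      have h := hgs n
      rw [← hrep (n + 1), ← hrep n] at h
      exact h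
    choose R hR1 hR2 hRs using hcomp
    -- the interleaved cover
    set A : ℕ → Opens X := fun n =>
      Nat.casesOn n (Us 0) (fun k => Us (k + 1) ⊓ ⟨(Cs k)ᶜ, (hCclosed k).isOpen_compl⟩) with hA
    have hAU : ∀ n, A n ≤ Us n := by
      intro n; cases n with
      | zero => exact le_rfl
      | succ k => exact inf_le_left
    have hAC : ∀ n, (A n : Set X) ⊆ Cs (n + 1) := fun n x hx => hUC n (hAU n hx)
    have hAQ : ∀ k m, k ≤ m → A k ≤ (rep (m + 1)).1.1 :=
      fun k m h x hx => (rep (m + 1)).1.2 (hCmono (Nat.succ_le_succ h) (hAC k hx))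
    have hUA : ∀ n, ∀ x ∈ Us n, ∃ k ≤ n, x ∈ A k := by
      intro n
      induction n with
      | zero => intro x hx; exact ⟨0, le_rfl, hx⟩
      | succ n ih =>
        intro x hx
        by_cases hc : x ∈ Cs n
        · obtain ⟨k, hk, hxk⟩ := ih x (hCU n hc)
          exact ⟨k, hk.trans (Nat.le_succ n), hxk⟩
        · exact ⟨n + 1, le_rfl, ⟨hx, hc⟩⟩
    -- master agreement lemma
    have master : ∀ (k : ℕ) (Wo : Opens X), (Wo : Set X) ⊆ Cs (k + 1) →
        ∀ (hWk : Wo ≤ (rep (k + 1)).1.1) (m : ℕ), k ≤ m → ∀ (hWm : Wo ≤ (rep (m + 1)).1.1),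
        G.map (homOfLE hWk).op (rep (k + 1)).2 = G.map (homOfLE hWm).op (rep (m + 1)).2 := by
      intro k Wo hWC hWk m hkm
      induction m, hkm using Nat.le_induction with
      | base => intro hWm; rfl
      | succ m hkm ih =>
        intro hWm
        have hWR : Wo ≤ (R (m + 1)).1 := fun x hx =>
          (R (m + 1)).2 (hCmono (Nat.succ_le_succ hkm) (hWC hx))
        calc G.map (homOfLE hWk).op (rep (k + 1)).2
            = G.map (homOfLE (hWR.trans (hR2 (m + 1)))).op (rep (m + 1)).2 :=
              ih (hWR.trans (hR2 (m + 1)))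
          _ = G.map (homOfLE hWR).op (G.map (homOfLE (hR2 (m + 1))).op (rep (m + 1)).2) :=
              (res_res G _ _ _).symm
          _ = G.map (homOfLE hWR).op (G.map (homOfLE (hR1 (m + 1))).op (rep (m + 2)).2) := by
              rw [hRs (m + 1)]
          _ = G.map (homOfLE (hWR.trans (hR1 (m + 1)))).op (rep (m + 2)).2 := res_res G _ _ _
          _ = G.map (homOfLE hWm).op (rep (m + 1 + 1)).2 := rfl
    have pair : ∀ (i j : ℕ) (Wo : Opens X) (hWi : Wo ≤ (rep (i + 1)).1.1)
        (hWj : Wo ≤ (rep (j + 1)).1.1), (Wo : Set X) ⊆ Cs (i + 1) → (Wo : Set X) ⊆ Cs (j + 1) →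
        G.map (homOfLE hWi).op (rep (i + 1)).2 = G.map (homOfLE hWj).op (rep (j + 1)).2 := by
      intro i j Wo hWi hWj hWCi hWCj
      rcases le_total i j with hij | hij
      · exact master i Wo hWCi hWi j hij hWj
      · exact (master j Wo hWCj hWj i hij hWi).symm
    -- glue along the cover A
    set K : ULift.{u} ℕ → Opens X := fun k => A k.down with hKdef
    have hKV : ∀ k, K k ≤ V := fun k x hx => hUV k.down (hAU k.down hx)
    have hsupK : iSup K = V := by
      apply le_antisymm (iSup_le hKV)
      intro x hx
      have hx' : x ∈ ⋃ n, (Us n : Set X) := by rw [hunion]; exact hx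
      obtain ⟨n, hn⟩ := Set.mem_iUnion.mp hx'
      obtain ⟨k, _, hxk⟩ := hUA n x hn
      exact Opens.mem_iSup.mpr ⟨⟨k⟩, hxk⟩
    have hKQ : ∀ k : ULift.{u} ℕ, K k ≤ (rep (k.down + 1)).1.1 :=
      fun k => hAQ k.down k.down le_rfl
    obtain ⟨t, ht, -⟩ := glue G hsheaf K V hsupK hKV
      (fun k => G.map (homOfLE (hKQ k)).op (rep (k.down + 1)).2)
      (fun i j => by
        rw [res_res, res_res]
        exact pair i.down j.down _ _ _
          (fun x hx => hAC i.down hx.1) (fun x hx => hAC j.down hx.2))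
    refine ⟨t, Subtype.ext (funext fun n => ?_)⟩
    show Quot.mk (GermRel G (Cs n))
      ⟨⟨V, fun x hx => by rw [← hunion]; exact Set.mem_iUnion.mpr ⟨n, hCU n hx⟩⟩, t⟩ = gs n
    rw [← hrep n]
    set Wn : Opens X := (R n).1 ⊓ Us n with hWndef
    have hWnC : Cs n ⊆ (Wn : Set X) := fun x hx => ⟨(R n).2 hx, hCU n hx⟩
    have hWnV : Wn ≤ V := fun x hx => hUV n hx.2
    have hWnQn : Wn ≤ (rep n).1.1 := inf_le_left.trans (hR2 n)
    have hWnQ : Wn ≤ (rep (n + 1)).1.1 := inf_le_left.trans (hR1 n)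
    have hWnCs : (Wn : Set X) ⊆ Cs (n + 1) := fun x hx => hUC n hx.2
    apply Quot.sound
    refine ⟨⟨Wn, hWnC⟩, hWnV, hWnQn, ?_⟩
    have step1 : G.map (homOfLE hWnQ).op (rep (n + 1)).2
        = G.map (homOfLE hWnQn).op (rep n).2 := by
      rw [← res_res G inf_le_left (hR1 n), hRs n, res_res]
    -- compare t with rep (n+1) over Wn via uniqueness of gluing over Wn
    set B : ULift.{u} ℕ → Opens X := fun k => Wn ⊓ A k.down with hBdef
    have hBW : ∀ k, B k ≤ Wn := fun k => inf_le_left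
    have hsupB : iSup B = Wn := by
      apply le_antisymm (iSup_le hBW)
      intro x hx
      obtain ⟨k, _, hxk⟩ := hUA n x hx.2
      exact Opens.mem_iSup.mpr ⟨⟨k⟩, ⟨hx, hxk⟩⟩
    have hBQ : ∀ k : ULift.{u} ℕ, B k ≤ (rep (k.down + 1)).1.1 :=
      fun k => inf_le_right.trans (hAQ k.down k.down le_rfl)
    have hBCs : ∀ k : ULift.{u} ℕ, (B k : Set X) ⊆ Cs (k.down + 1) :=
      fun k x hx => hAC k.down hx.2
    obtain ⟨u, hu, huniqB⟩ := glue G hsheaf B Wn hsupB hBW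
      (fun k => G.map (homOfLE (hBQ k)).op (rep (k.down + 1)).2)
      (fun i j => by
        rw [res_res, res_res]
        exact pair i.down j.down _ _ _
          (fun x hx => hBCs i hx.1) (fun x hx => hBCs j hx.2))
    have e1 : ∀ k, G.map (homOfLE (hBW k)).op (G.map (homOfLE hWnV).op t)
        = G.map (homOfLE (hBQ k)).op (rep (k.down + 1)).2 := by
      intro k
      rw [res_res]
      have hBA : B k ≤ K k := fun x hx => hx.2
      rw [← res_res G hBA (hKV k), ht k, res_res]
    have e2 : ∀ k, G.map (homOfLE (hBW k)).op (G.map (homOfLE hWnQ).op (rep (n + 1)).2)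
        = G.map (homOfLE (hBQ k)).op (rep (k.down + 1)).2 := by
      intro k
      rw [res_res]
      exact pair n k.down _ _ _
        (fun x hx => hWnCs ((hBW k) hx)) (hBCs k)
    have step2 : G.map (homOfLE hWnV).op t = G.map (homOfLE hWnQ).op (rep (n + 1)).2 :=
      (huniqB _ e1).trans (huniqB _ e2).symm
    exact step2.trans step1
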